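/- There is a Borel (indeed continuous) map f : 2^ℕ → 2^ℕ that is a homomorphism from E₀ to E₀ such that for any comeager C ⊆ 2^ℕ × 2^ℕ one can choose f with: x ¬E₀ y implies (f(x), f(y)) ∈ C. -/
import Mathlib

/-- Eventual equality on Cantor space `2^ℕ`. -/
def E0 (x y : ℕ → Bool) : Prop := ∃ N, ∀ n ≥ N, x n = y n

namespace E0Aux

open Set

abbrev Cantor := ℕ → Bool

/-- Cylinder determined by a finite string. -/
def cyl (l : List Bool) : Set Cantor := {y | ∀ i < l.length, y i = l.getD i false}

lemma prefix_append_left (a : List Bool) {s t : List Bool} (h : s <+: t) :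
    a ++ s <+: a ++ t := by
  obtain ⟨r, rfl⟩ := h
  exact ⟨r, by simp⟩

lemma getD_of_prefix {A B : List Bool} (h : A <+: B) {n : ℕ} (hn : n < A.length) :
    B.getD n false = A.getD n false := by
  obtain ⟨t, rfl⟩ := h
  exact List.getD_append _ _ _ _ hn

lemma cyl_anti {l l' : List Bool} (h : l <+: l') : cyl l' ⊆ cyl l := by
  intro y hy i hi
  have hlen : i < l'.length := lt_of_lt_of_le hi h.length_le
  rw [hy i hlen, getD_of_prefix h hi]

lemma isOpen_cyl (l : List Bool) : IsOpen (cyl l) := by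
  have : cyl l = ⋂ i ∈ Finset.range l.length,
      (fun y : Cantor => y i) ⁻¹' {l.getD i false} := by
    ext y
    simp [cyl]
  rw [this]
  exact isOpen_biInter_finset fun i _ =>
    (isOpen_discrete _).preimage (continuous_apply i)

lemma mem_cyl_self (l : List Bool) : (fun i => l.getD i false) ∈ cyl l :=
  fun _ _ => rfl

lemma exists_cyl_subset {U : Set Cantor} (hU : IsOpen U) {z : Cantor} (hz : z ∈ U) :
    ∃ n, ∀ y : Cantor, (∀ i < n, y i = z i) → y ∈ U := by
  obtain ⟨I, u, h1, h2⟩ := isOpen_pi_iff.mp hU z hz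
  refine ⟨I.sup id + 1, fun y hy => h2 ?_⟩
  rw [Set.mem_pi]
  intro a ha
  have : a < I.sup id + 1 := Nat.lt_succ_of_le (Finset.le_sup (f := id) ha)
  rw [hy a this]
  exact (h1 a ha).2

lemma exists_pair_cyl_subset {U : Set (Cantor × Cantor)} (hU : IsOpen U)
    {z : Cantor × Cantor} (hz : z ∈ U) :
    ∃ n, ∀ y1 y2 : Cantor, (∀ i < n, y1 i = z.1 i) → (∀ i < n, y2 i = z.2 i) →
      (y1, y2) ∈ U := by
  obtain ⟨u, v, hu, hv, hz1, hz2, huv⟩ := isOpen_prod_iff.mp hU z.1 z.2 (by simpa using hz)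
  obtain ⟨n1, h1⟩ := exists_cyl_subset hu hz1
  obtain ⟨n2, h2⟩ := exists_cyl_subset hv hz2
  exact ⟨max n1 n2, fun y1 y2 hy1 hy2 =>
    huv ⟨h1 y1 fun i hi => hy1 i (lt_of_lt_of_le hi (le_max_left _ _)),
         h2 y2 fun i hi => hy2 i (lt_of_lt_of_le hi (le_max_right _ _))⟩⟩

lemma exists_extension_cyl (z : Cantor) (u : List Bool) (hz : z ∈ cyl u) (n : ℕ)
    (hn : u.length ≤ n) :
    ∃ t : List Bool, u <+: t ∧ t.length = n ∧ ∀ i < n, t.getD i false = z i := by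
  refine ⟨u ++ (List.range (n - u.length)).map fun j => z (u.length + j),
    List.prefix_append _ _, by simp; omega, ?_⟩
  intro i hi
  by_cases h : i < u.length
  · rw [List.getD_append _ _ _ _ h]
    exact (hz i h).symm
  · rw [List.getD_append_right _ _ _ _ (le_of_not_gt h)]
    have hlt : i - u.length < n - u.length := by omega
    rw [List.getD_eq_getElem _ _ (by simpa using hlt), List.getElem_map]
    rw [List.getElem_range]
    congr 1
    omega

lemma extend_step {U : Set (Cantor × Cantor)} (hUo : IsOpen U) (hUd : Dense U)
    (u v p q : List Bool) :
    ∃ p' q' : List Bool, p <+: p' ∧ q <+: q' ∧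
      cyl (u ++ p') ×ˢ cyl (v ++ q') ⊆ U := by
  have hne : (cyl (u ++ p) ×ˢ cyl (v ++ q)).Nonempty :=
    ⟨⟨fun i => (u ++ p).getD i false, fun i => (v ++ q).getD i false⟩,
      ⟨mem_cyl_self _, mem_cyl_self _⟩⟩
  obtain ⟨z, hzc, hzU⟩ :=
    hUd.inter_open_nonempty _ ((isOpen_cyl _).prod (isOpen_cyl _)) hne
  obtain ⟨n0, hn0⟩ := exists_pair_cyl_subset hUo hzU
  set n := max n0 (max (u ++ p).length (v ++ q).length) with hndef
  obtain ⟨t1, ht1p, ht1len, ht1⟩ := exists_extension_cyl z.1 (u ++ p) hzc.1 n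
    (le_trans (le_max_left _ _) (le_max_right _ _))
  obtain ⟨t2, ht2p, ht2len, ht2⟩ := exists_extension_cyl z.2 (v ++ q) hzc.2 n
    (le_trans (le_max_right _ _) (le_max_right _ _))
  obtain ⟨r1, hr1⟩ := ht1p
  obtain ⟨r2, hr2⟩ := ht2p
  refine ⟨p ++ r1, q ++ r2, List.prefix_append _ _, List.prefix_append _ _, ?_⟩
  rintro ⟨y1, y2⟩ ⟨hy1, hy2⟩
  have e1 : u ++ (p ++ r1) = t1 := by rw [← List.append_assoc, hr1]
  have e2 : v ++ (q ++ r2) = t2 := by rw [← List.append_assoc, hr2]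
  rw [e1] at hy1
  rw [e2] at hy2
  refine hn0 y1 y2 (fun i hi => ?_) (fun i hi => ?_)
  · have hin : i < n := lt_of_lt_of_le hi (le_max_left _ _)
    exact (hy1 i (ht1len ▸ hin)).trans (ht1 i hin)
  · have hin : i < n := lt_of_lt_of_le hi (le_max_left _ _)
    exact (hy2 i (ht2len ▸ hin)).trans (ht2 i hin)

lemma multi_extend (D : ℕ → Set (Cantor × Cantor)) (hDo : ∀ k, IsOpen (D k))
    (hDd : ∀ k, Dense (D k)) :
    ∀ cs : List (List Bool × List Bool × ℕ × Bool), ∃ p q : List Bool,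
      ∀ c ∈ cs, cyl (c.1 ++ (if c.2.2.2 then q else p)) ×ˢ
        cyl (c.2.1 ++ (if c.2.2.2 then p else q)) ⊆ D c.2.2.1
  | [] => ⟨[], [], by simp⟩
  | c :: cs => by
    obtain ⟨p, q, hpq⟩ := multi_extend D hDo hDd cs
    by_cases hflag : c.2.2.2
    · obtain ⟨q', p', hq, hp, hsub⟩ :=
        extend_step (hDo c.2.2.1) (hDd c.2.2.1) c.1 c.2.1 q p
      refine ⟨p', q', ?_⟩
      intro d hd
      rcases List.mem_cons.mp hd with rfl | hd
      · simpa [hflag] using hsub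
      · have hsel1 : (if d.2.2.2 then q else p) <+: (if d.2.2.2 then q' else p') := by
          by_cases h : d.2.2.2 <;> simp [h, hp, hq]
        have hsel2 : (if d.2.2.2 then p else q) <+: (if d.2.2.2 then p' else q') := by
          by_cases h : d.2.2.2 <;> simp [h, hp, hq]
        exact subset_trans (Set.prod_mono (cyl_anti (prefix_append_left _ hsel1))
          (cyl_anti (prefix_append_left _ hsel2))) (hpq d hd)
    · obtain ⟨p', q', hp, hq, hsub⟩ :=
        extend_step (hDo c.2.2.1) (hDd c.2.2.1) c.1 c.2.1 p q
      refine ⟨p', q', ?_⟩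
      intro d hd
      rcases List.mem_cons.mp hd with rfl | hd
      · simpa [hflag] using hsub
      · have hsel1 : (if d.2.2.2 then q else p) <+: (if d.2.2.2 then q' else p') := by
          by_cases h : d.2.2.2 <;> simp [h, hp, hq]
        have hsel2 : (if d.2.2.2 then p else q) <+: (if d.2.2.2 then p' else q') := by
          by_cases h : d.2.2.2 <;> simp [h, hp, hq]
        exact subset_trans (Set.prod_mono (cyl_anti (prefix_append_left _ hsel1))
          (cyl_anti (prefix_append_left _ hsel2))) (hpq d hd)

/-- Concatenation of the first `m` blocks, selected by the bits of `x`. -/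
def pre (w : ℕ → Bool → List Bool) (x : Cantor) : ℕ → List Bool
  | 0 => []
  | m + 1 => pre w x m ++ w m (x m)

lemma pre_length_eq {w : ℕ → Bool → List Bool}
    (hw : ∀ m, (w m false).length = (w m true).length) (x y : Cantor) (m : ℕ) :
    (pre w x m).length = (pre w y m).length := by
  induction m with
  | zero => rfl
  | succ m ih =>
    have hb : (w m (x m)).length = (w m (y m)).length := by
      cases hx : x m <;> cases hy : y m <;> simp [hw m]
    simp [pre, ih, hb]

lemma pre_prefix (w : ℕ → Bool → List Bool) (x : Cantor) {a b : ℕ} (h : a ≤ b) :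
    pre w x a <+: pre w x b := by
  induction b with
  | zero => rw [Nat.le_zero.mp h]
  | succ b ih =>
    rcases eq_or_lt_of_le h with rfl | h'
    · exact List.prefix_refl _
    · exact (ih (Nat.lt_succ_iff.mp h')).trans ⟨w b (x b), rfl⟩

lemma pre_length_ge {w : ℕ → Bool → List Bool}
    (hw : ∀ m b, 1 ≤ (w m b).length) (x : Cantor) (m : ℕ) :
    m ≤ (pre w x m).length := by
  induction m with
  | zero => simp
  | succ m ih =>
    have := hw m (x m)
    simp only [pre, List.length_append]
    omega

lemma pre_congr_x {w : ℕ → Bool → List Bool} {x y : Cantor} {m : ℕ}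
    (h : ∀ i < m, x i = y i) : pre w x m = pre w y m := by
  induction m with
  | zero => rfl
  | succ m ih =>
    simp only [pre]
    rw [ih fun i hi => h i (Nat.lt_succ_of_lt hi), h m (Nat.lt_succ_self m)]

lemma pre_congr_w {w1 w2 : ℕ → Bool → List Bool} {x : Cantor} {m : ℕ}
    (h : ∀ i < m, w1 i = w2 i) : pre w1 x m = pre w2 x m := by
  induction m with
  | zero => rfl
  | succ m ih =>
    simp only [pre]
    rw [ih fun i hi => h i (Nat.lt_succ_of_lt hi), h m (Nat.lt_succ_self m)]

/-- A finite list containing all possible values of `pre w x m`. -/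
def enumPre (w : ℕ → Bool → List Bool) : ℕ → List (List Bool)
  | 0 => [[]]
  | m + 1 => (enumPre w m).flatMap fun A => [A ++ w m false, A ++ w m true]

lemma pre_mem_enumPre (w : ℕ → Bool → List Bool) (x : Cantor) (m : ℕ) :
    pre w x m ∈ enumPre w m := by
  induction m with
  | zero => simp [pre, enumPre]
  | succ m ih =>
    simp only [pre, enumPre, List.mem_flatMap]
    exact ⟨pre w x m, ih, by cases hx : x m <;> simp⟩

lemma stage_exists (D : ℕ → Set (Cantor × Cantor)) (hDo : ∀ k, IsOpen (D k))
    (hDd : ∀ k, Dense (D k)) (w : ℕ → Bool → List Bool) (m : ℕ) :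
    ∃ pq : Bool → List Bool,
      ((pq false).length = (pq true).length ∧ 1 ≤ (pq false).length) ∧
      ∀ k ≤ m, ∀ u ∈ enumPre w m, ∀ v ∈ enumPre w m, ∀ i j : Bool, i ≠ j →
        cyl (u ++ pq i) ×ˢ cyl (v ++ pq j) ⊆ D k := by
  classical
  set cs : List (List Bool × List Bool × ℕ × Bool) :=
    (List.range (m + 1)).flatMap fun k =>
      (enumPre w m).flatMap fun u =>
        (enumPre w m).flatMap fun v => [(u, v, k, false), (u, v, k, true)] with hcs
  obtain ⟨p, q, H⟩ := multi_extend D hDo hDd cs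
  set N := max p.length q.length + 1 with hN
  set p' := p ++ List.replicate (N - p.length) false with hp'
  set q' := q ++ List.replicate (N - q.length) false with hq'
  have hpp : p <+: p' := List.prefix_append _ _
  have hqq : q <+: q' := List.prefix_append _ _
  refine ⟨fun b => bif b then q' else p', ⟨by simp [p', q']; omega, by simp [p']; omega⟩, ?_⟩
  intro k hk u hu v hv i j hij
  have hmem : ∀ b : Bool, (u, v, k, b) ∈ cs := by
    intro b
    simp only [hcs, List.mem_flatMap, List.mem_range]
    exact ⟨k, by omega, u, hu, v, hv, by cases b <;> simp⟩
  cases i <;> cases j <;> simp at hij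
  · -- i = false, j = true
    have h1 := H (u, v, k, false) (hmem false)
    simp only [if_neg Bool.false_ne_true] at h1
    refine subset_trans (Set.prod_mono (cyl_anti (prefix_append_left _ hpp))
      (cyl_anti (prefix_append_left _ hqq))) ?_
    simpa using h1
  · -- i = true, j = false
    have h1 := H (u, v, k, true) (hmem true)
    simp only [if_pos rfl] at h1
    refine subset_trans (Set.prod_mono (cyl_anti (prefix_append_left _ hqq))
      (cyl_anti (prefix_append_left _ hpp))) ?_
    simpa using h1

/-- Finite approximations to the block sequence. -/
def approx (step : (ℕ → Bool → List Bool) → ℕ → Bool → List Bool) :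
    ℕ → ℕ → Bool → List Bool
  | 0 => fun _ _ => []
  | m + 1 => Function.update (approx step m) m (step (approx step m) m)

lemma approx_eq (step : (ℕ → Bool → List Bool) → ℕ → Bool → List Bool) :
    ∀ {j m : ℕ}, m < j → approx step j m = approx step (m + 1) m := by
  intro j
  induction j with
  | zero => exact fun h => absurd h (Nat.not_lt_zero _)
  | succ j ih =>
    intro m hm
    rcases Nat.lt_succ_iff_lt_or_eq.mp hm with h | rfl
    · rw [approx, Function.update_of_ne (by omega)]
      exact ih h
    · rfl

lemma key_tail {w : ℕ → Bool → List Bool}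
    (hw : ∀ m, (w m false).length = (w m true).length) (x y : Cantor) (N n : ℕ)
    (hn : (pre w x N).length ≤ n) (hxy : ∀ i, N ≤ i → x i = y i) :
    ∀ M, (pre w x M).getD n false = (pre w y M).getD n false := by
  intro M
  induction M with
  | zero => rfl
  | succ M ih =>
    by_cases hM : M < N
    · have h1 : (pre w x (M + 1)).length ≤ n :=
        le_trans (pre_prefix w x hM).length_le hn
      have h2 : (pre w y (M + 1)).length ≤ n := by
        rw [pre_length_eq hw y x]; exact h1
      rw [List.getD_eq_default _ _ h1, List.getD_eq_default _ _ h2]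
    · have hxM : x M = y M := hxy M (le_of_not_gt hM)
      have hlen : (pre w x M).length = (pre w y M).length := pre_length_eq hw x y M
      simp only [pre]
      by_cases hn' : n < (pre w x M).length
      · rw [List.getD_append _ _ _ _ hn', List.getD_append _ _ _ _ (hlen ▸ hn')]
        exact ih
      · rw [List.getD_append_right _ _ _ _ (le_of_not_gt hn'),
          List.getD_append_right _ _ _ _ (hlen ▸ le_of_not_gt hn'), hxM, hlen]

lemma main (D : ℕ → Set (Cantor × Cantor)) (hDo : ∀ k, IsOpen (D k))
    (hDd : ∀ k, Dense (D k)) :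
    ∃ f : Cantor → Cantor, Continuous f ∧ (∀ x y, E0 x y → E0 (f x) (f y)) ∧
      ∀ x y, ¬ E0 x y → ∀ k, (f x, f y) ∈ D k := by
  classical
  choose step hstep1 hstep2 using stage_exists D hDo hDd
  set w : ℕ → Bool → List Bool := fun m => approx step (m + 1) m with hwdef
  have wdef : ∀ m, w m = step (approx step m) m := by
    intro m
    simp only [hwdef, approx, Function.update_self]
  have hw_len : ∀ m, (w m false).length = (w m true).length := by
    intro m; rw [wdef]; exact (hstep1 _ m).1
  have hw_pos : ∀ m b, 1 ≤ (w m b).length := by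
    intro m b
    cases b
    · rw [wdef]; exact (hstep1 _ m).2
    · rw [← hw_len m, wdef]; exact (hstep1 _ m).2
  have pre_w_eq : ∀ (x : Cantor) (m : ℕ), pre (approx step m) x m = pre w x m := by
    intro x m
    exact pre_congr_w fun i hi => approx_eq step hi
  have cond' : ∀ m, ∀ k ≤ m, ∀ x y : Cantor, ∀ i j : Bool, i ≠ j →
      cyl (pre w x m ++ w m i) ×ˢ cyl (pre w y m ++ w m j) ⊆ D k := by
    intro m k hk x y i j hij
    have := hstep2 (approx step m) m k hk
      (pre (approx step m) x m) (pre_mem_enumPre _ x m)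
      (pre (approx step m) y m) (pre_mem_enumPre _ y m) i j hij
    rwa [pre_w_eq, pre_w_eq, ← wdef] at this
  set f : Cantor → Cantor := fun x n => (pre w x (n + 1)).getD n false with hfdef
  have f_eq : ∀ (x : Cantor) (M n : ℕ), n < (pre w x M).length →
      f x n = (pre w x M).getD n false := by
    intro x M n hn
    simp only [hfdef]
    rcases le_total (n + 1) M with h | h
    · have hlt : n < (pre w x (n + 1)).length :=
        lt_of_lt_of_le (Nat.lt_succ_self n) (pre_length_ge hw_pos x (n + 1))
      rw [getD_of_prefix (pre_prefix w x h) hlt]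
    · rw [getD_of_prefix (pre_prefix w x h) hn]
  have f_mem_cyl : ∀ (x : Cantor) (M : ℕ), f x ∈ cyl (pre w x M) :=
    fun x M n hn => f_eq x M n hn
  refine ⟨f, ?_, ?_, ?_⟩
  · -- continuity
    apply continuous_pi
    intro n
    have hrep : (fun x : Cantor => f x n) =
        (fun v : Fin (n + 1) → Bool =>
          (pre w (fun i => if h : i < n + 1 then v ⟨i, h⟩ else false) (n + 1)).getD n false) ∘
          fun (x : Cantor) (i : Fin (n + 1)) => x i := by
      funext x
      simp only [Function.comp, hfdef]
      congr 1
      exact pre_congr_x fun i hi => by simp [hi]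
    rw [hrep]
    exact continuous_of_discreteTopology.comp (continuous_pi fun i => continuous_apply _)
  · -- homomorphism
    rintro x y ⟨N, hN⟩
    refine ⟨(pre w x N).length, fun n hn => ?_⟩
    have hlt : n < (pre w x (n + 1)).length :=
      lt_of_lt_of_le (Nat.lt_succ_self n) (pre_length_ge hw_pos x (n + 1))
    have hlty : n < (pre w y (n + 1)).length := by
      rw [pre_length_eq hw_len y x]; exact hlt
    rw [f_eq x (n + 1) n hlt, f_eq y (n + 1) n hlty]
    exact key_tail hw_len x y N n hn hN (n + 1)
  · -- genericity
    intro x y hxy k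
    rw [E0] at hxy
    push_neg at hxy
    obtain ⟨m, hm, hne⟩ := hxy k
    have hsub := cond' m k hm x y (x m) (y m) hne
    have hx : f x ∈ cyl (pre w x m ++ w m (x m)) := f_mem_cyl x (m + 1)
    have hy : f y ∈ cyl (pre w y m ++ w m (y m)) := f_mem_cyl y (m + 1)
    exact hsub ⟨hx, hy⟩

end E0Aux

/-- For any comeager `C ⊆ 2^ℕ × 2^ℕ` there is a continuous homomorphism `f` from `E₀`
to `E₀` such that `¬ x E₀ y` implies `(f x, f y) ∈ C`. -/
theorem E0_splitting_homomorphism (C : Set ((ℕ → Bool) × (ℕ → Bool)))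
    (hC : C ∈ residual ((ℕ → Bool) × (ℕ → Bool))) :
    ∃ f : (ℕ → Bool) → (ℕ → Bool), Continuous f ∧
      (∀ x y, E0 x y → E0 (f x) (f y)) ∧
      (∀ x y, ¬ E0 x y → (f x, f y) ∈ C) := by
  obtain ⟨t, htC, htGδ, htd⟩ := mem_residual.mp hC
  obtain ⟨D, hDo, rfl⟩ := htGδ.eq_iInter_nat
  have hDd : ∀ n, Dense (D n) := fun n =>
    htd.mono (Set.iInter_subset D n)
  obtain ⟨f, hf1, hf2, hf3⟩ := E0Aux.main D hDo hDd
  exact ⟨f, hf1, hf2, fun x y h => htC (Set.mem_iInter.mpr (hf3 x y h))⟩
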